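/- arXiv:1503.03318 — 2 statements merged into one kernel-verified Lean document; each statement's English description precedes it below -/
import Mathlib

section
/- Let P be a row-stochastic matrix over finite index sets, let α₁ = min_i max_j P(i,j), and suppose P = Σ_{q=1}^Q β_q M^q is any representation of P as a convex combination of deterministic 0-1 matrices M^q (each having exactly one 1 per row), with β_q ∈ [0,1] and Σ_q β_q = 1. Then max_q β_q ≤ α₁. In particular, the greedy decomposition whose first coefficient is α₁ achieves the maximal possible leading coefficient among all such decompositions. -/
/-- If `P = ∑ q, β q • M q` is any representation of the row-stochastic matrix `P` as a
convex combination of deterministic 0-1 matrices, then every coefficient `β q` is bounded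
by `α₁ = min_i max_j P i j`; hence the greedy decomposition, whose leading coefficient is
`α₁`, achieves the maximal possible leading coefficient. -/
theorem convexCombination_coeff_le_min_rowMax
    {I J : Type*} [Fintype I] [Fintype J] [Nonempty I] [Nonempty J]
    (P : I → J → ℝ)
    (h0 : ∀ i j, 0 ≤ P i j) (h1 : ∀ i j, P i j ≤ 1)
    (hrow : ∀ i, ∑ j, P i j = 1)
    (Q : ℕ) (β : Fin Q → ℝ) (M : Fin Q → I → J → ℝ)
    (hβ : ∀ q, 0 ≤ β q ∧ β q ≤ 1) (hβsum : ∑ q, β q = 1)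
    (hM : ∀ q, (∀ i j, M q i j = 0 ∨ M q i j = 1) ∧ ∀ i, ∑ j, M q i j = 1)
    (hdecomp : ∀ i j, P i j = ∑ q, β q * M q i j) :
    ∀ q, β q ≤ Finset.univ.inf' Finset.univ_nonempty
          (fun i => Finset.univ.sup' Finset.univ_nonempty (P i)) := by
  intro q
  apply Finset.le_inf'
  intro i _
  -- find j with M q i j = 1
  obtain ⟨j, hj⟩ : ∃ j, M q i j = 1 := by
    by_contra h
    push_neg at h
    have : ∑ j, M q i j = 0 := Finset.sum_eq_zero fun j _ => by
      rcases (hM q).1 i j with h0' | h1'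
      · exact h0'
      · exact absurd h1' (h j)
    simp [(hM q).2 i] at this
  have hle : β q ≤ P i j := by
    rw [hdecomp i j]
    calc β q = β q * M q i j := by rw [hj, mul_one]
    _ ≤ ∑ q', β q' * M q' i j := by
        apply Finset.single_le_sum (f := fun q' => β q' * M q' i j) _ (Finset.mem_univ q)
        intro q' _
        apply mul_nonneg (hβ q').1
        rcases (hM q').1 i j with h | h <;> simp [h]
  exact hle.trans (Finset.le_sup' (P i) (Finset.mem_univ j))
end

section
/- In the iterative decomposition procedure P⁰ = P, α_m = min_i max_j P^{m−1}(i,j), L^m the argmax indicator matrix of P^{m−1}, P^m = P^{m−1} − α_m L^m, the sequence of coefficients is nonincreasing: α_{m+1} ≤ α_m for all m ≥ 1. -/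
/-- The maximum of row `i` of the matrix `P`. -/
noncomputable def rowMax {I J : Type*} [Fintype J] [Nonempty J]
    (P : I → J → ℝ) (i : I) : ℝ :=
  Finset.univ.sup' Finset.univ_nonempty (P i)

open Classical in
/-- The first column index achieving the maximum of row `i` of `P`. -/
noncomputable def argmaxRow {I J : Type*} [Fintype J] [Nonempty J] [LinearOrder J]
    (P : I → J → ℝ) (i : I) : J :=
  (Finset.univ.filter fun j => P i j = rowMax P i).min' (by
    obtain ⟨b, _, hb⟩ := Finset.exists_mem_eq_sup' (Finset.univ_nonempty) (P i)
    exact ⟨b, Finset.mem_filter.mpr ⟨Finset.mem_univ b, hb.symm⟩⟩)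

/-- The greedy coefficient `α = min_i max_j P i j`. -/
noncomputable def alphaCoef {I J : Type*} [Fintype I] [Nonempty I] [Fintype J] [Nonempty J]
    (P : I → J → ℝ) : ℝ :=
  Finset.univ.inf' Finset.univ_nonempty (rowMax P)

/-- The 0-1 matrix with a `1` in row `i` exactly at the first column achieving the
row maximum of `P`. -/
noncomputable def Lmat {I J : Type*} [Fintype J] [Nonempty J] [LinearOrder J]
    (P : I → J → ℝ) : I → J → ℝ :=
  fun i j => if j = argmaxRow P i then 1 else 0

/-- The iterative greedy decomposition procedure:
`P⁰ = P`, `P^{m+1} = P^m - α(P^m) • L(P^m)`. -/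
noncomputable def iterP {I J : Type*} [Fintype I] [Nonempty I]
    [Fintype J] [Nonempty J] [LinearOrder J]
    (P : I → J → ℝ) : ℕ → I → J → ℝ
  | 0 => P
  | m + 1 => fun i j => iterP P m i j - alphaCoef (iterP P m) * Lmat (iterP P m) i j


lemma argmaxRow_spec {I J : Type*} [Fintype J] [Nonempty J] [LinearOrder J]
    (P : I → J → ℝ) (i : I) : P i (argmaxRow P i) = rowMax P i := by
  classical
  have h := Finset.min'_mem (Finset.univ.filter fun j => P i j = rowMax P i)
    (by
      obtain ⟨b, _, hb⟩ := Finset.exists_mem_eq_sup' (Finset.univ_nonempty) (P i)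
      exact ⟨b, Finset.mem_filter.mpr ⟨Finset.mem_univ b, hb.symm⟩⟩)
  simpa [argmaxRow] using (Finset.mem_filter.mp h).2

lemma alphaCoef_le_rowMax {I J : Type*} [Fintype I] [Nonempty I] [Fintype J] [Nonempty J]
    (P : I → J → ℝ) (i : I) : alphaCoef P ≤ rowMax P i :=
  Finset.inf'_le _ (Finset.mem_univ i)

lemma iterP_nonneg {I J : Type*} [Fintype I] [Nonempty I] [Fintype J] [Nonempty J]
    [LinearOrder J] (P : I → J → ℝ) (h0 : ∀ i j, 0 ≤ P i j) :
    ∀ m i j, 0 ≤ iterP P m i j := by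
  intro m
  induction m with
  | zero => exact h0
  | succ m ih =>
    intro i j
    show 0 ≤ iterP P m i j - alphaCoef (iterP P m) * Lmat (iterP P m) i j
    by_cases hj : j = argmaxRow (iterP P m) i
    · subst hj
      have hL : Lmat (iterP P m) i (argmaxRow (iterP P m) i) = 1 := if_pos rfl
      rw [hL, mul_one, sub_nonneg]
      exact le_of_le_of_eq (alphaCoef_le_rowMax _ i) (argmaxRow_spec _ i).symm
    · simp only [Lmat, if_neg hj, mul_zero, sub_zero]
      exact ih i j

lemma alphaCoef_nonneg {I J : Type*} [Fintype I] [Nonempty I] [Fintype J] [Nonempty J]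
    (P : I → J → ℝ) (h0 : ∀ i j, 0 ≤ P i j) : 0 ≤ alphaCoef P := by
  apply Finset.le_inf'
  intro i _
  obtain ⟨j⟩ := (inferInstance : Nonempty J)
  exact le_trans (h0 i j) (Finset.le_sup' _ (Finset.mem_univ j))

/-- In the iterative decomposition procedure, the sequence of greedy coefficients is
nonincreasing: `α_{m+1} ≤ α_m` for all `m ≥ 1`. -/
theorem alphaCoef_iterP_antitone
    {I J : Type*} [Fintype I] [Nonempty I] [Fintype J] [Nonempty J] [LinearOrder J]
    (P : I → J → ℝ)
    (h0 : ∀ i j, 0 ≤ P i j) (h1 : ∀ i j, P i j ≤ 1)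
    (hrow : ∀ i, ∑ j, P i j = 1) :
    ∀ m : ℕ, alphaCoef (iterP P (m + 1)) ≤ alphaCoef (iterP P m) := by
  intro m
  have hnn := iterP_nonneg P h0
  have hα : 0 ≤ alphaCoef (iterP P m) := alphaCoef_nonneg _ (hnn m)
  apply Finset.le_inf'
  intro i _
  refine le_trans (Finset.inf'_le _ (Finset.mem_univ i)) ?_
  apply Finset.sup'_le
  intro j _
  refine le_trans ?_ (Finset.le_sup' _ (Finset.mem_univ j))
  show iterP P m i j - alphaCoef (iterP P m) * Lmat (iterP P m) i j ≤ iterP P m i j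
  have : 0 ≤ alphaCoef (iterP P m) * Lmat (iterP P m) i j := by
    apply mul_nonneg hα
    unfold Lmat; split <;> norm_num
  linarith
end
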